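/- Let P_0 ∈ ℝ^{n×n} be symmetric positive semidefinite with A^T P_0 + P_0 A = P_0 B B^T P_0 and A − B B^T P_0 Hurwitz, and let Q ∈ ℝ^{n×n} be such that A + Q C^T C is Hurwitz. Consider N agents ẋ_i = A x_i + B u_i, y_i = C x_i, with observer-based output feedback u_i = −B^T P_0 δ̂_i, where each observer state δ̂_i ∈ ℝ^n evolves according to δ̂̇_i = (A − B B^T P_0) δ̂_i − Q C^T ( (Σ_{k=1}^N a_k)^{-1} Σ_{j=1}^N a_j (y_i − y_j) − C δ̂_i ). Then for all initial conditions x_i(0) and δ̂_i(0), the system reaches asymptotic output consensus: y_i(t) − y_j(t) → 0 as t → ∞ for all i, j. -/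

import Mathlib

open Matrix MeasureTheory Filter

/-- A real square matrix is Hurwitz if every eigenvalue of its complexification has strictly
negative real part. -/
def IsHurwitz {n : ℕ} (M : Matrix (Fin n) (Fin n) ℝ) : Prop :=
  ∀ μ ∈ spectrum ℂ (M.map (algebraMap ℝ ℂ)), μ.re < 0

namespace ConsensusAux

open NormedSpace Polynomial

set_option linter.unusedSectionVars false

attribute [local instance] Matrix.linftyOpNormedAddCommGroup Matrix.linftyOpNormedRing
  Matrix.linftyOpNormedAlgebra Matrix.linftyOpNormedSpace

section Spectral

variable {ι : Type*} [Fintype ι] [DecidableEq ι]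



/-- `X ↦ X.mulVec v` as a continuous linear map. -/
noncomputable def mulVecCLM (𝕜 : Type*) [RCLike 𝕜] (v : ι → 𝕜) :
    Matrix ι ι 𝕜 →L[𝕜] (ι → 𝕜) :=
  LinearMap.toContinuousLinearMap
    { toFun := fun X => X.mulVec v
      map_add' := fun X Y => Matrix.add_mulVec X Y v
      map_smul' := fun c X => smul_mulVec c X v }

@[simp] lemma mulVecCLM_apply (𝕜 : Type*) [RCLike 𝕜] (v : ι → 𝕜) (X : Matrix ι ι 𝕜) :
    mulVecCLM 𝕜 v X = X.mulVec v := rfl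

lemma pow_mulVec_eigen (M : Matrix ι ι ℂ) {μ : ℂ} {v : ι → ℂ}
    (hv : M.mulVec v = μ • v) (k : ℕ) : (M ^ k).mulVec v = (μ ^ k) • v := by
  induction k with
  | zero => simp [Matrix.one_mulVec]
  | succ k ih =>
      rw [pow_succ, pow_succ, ← Matrix.mulVec_mulVec, hv, Matrix.mulVec_smul, ih,
        smul_smul, mul_comm]

lemma eigen_exp (M : Matrix ι ι ℂ) {μ : ℂ} {v : ι → ℂ} (hv : M.mulVec v = μ • v) :
    (exp M).mulVec v = Complex.exp μ • v := by
  have h1 : HasSum (fun k : ℕ => (k.factorial⁻¹ : ℂ) • M ^ k) (exp M) :=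
    exp_series_hasSum_exp' M
  have h2 := (mulVecCLM ℂ v).hasSum h1
  have h3 : HasSum (fun k : ℕ => (k.factorial⁻¹ : ℂ) • μ ^ k) (exp μ) :=
    exp_series_hasSum_exp' μ
  have h4 := h3.smul_const v
  have hterm : ∀ k : ℕ, (mulVecCLM ℂ v) ((k.factorial⁻¹ : ℂ) • M ^ k)
      = ((k.factorial⁻¹ : ℂ) • μ ^ k) • v := by
    intro k
    rw [_root_.map_smul, mulVecCLM_apply, pow_mulVec_eigen M hv k, smul_assoc]
  rw [funext hterm] at h2
  have := h2.unique h4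
  rw [mulVecCLM_apply] at this
  rw [this, Complex.exp_eq_exp_ℂ]

lemma eigen_aeval (M : Matrix ι ι ℂ) {μ : ℂ} {v : ι → ℂ} (hv : M.mulVec v = μ • v)
    (q : ℂ[X]) : (aeval M q).mulVec v = q.eval μ • v := by
  induction q using Polynomial.induction_on' with
  | add p q hp hq => rw [map_add, Matrix.add_mulVec, hp, hq, eval_add, add_smul]
  | monomial k c =>
      rw [aeval_monomial, eval_monomial, ← Algebra.smul_def, smul_mulVec,
        pow_mulVec_eigen M hv k, smul_smul]

lemma exp_mem_adjoin (M : Matrix ι ι ℂ) : exp M ∈ Algebra.adjoin ℂ {M} := by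
  have h1 : HasSum (fun k : ℕ => (k.factorial⁻¹ : ℂ) • M ^ k) (exp M) :=
    exp_series_hasSum_exp' M
  have hcl : IsClosed ((Subalgebra.toSubmodule (Algebra.adjoin ℂ {M}) :
      Submodule ℂ (Matrix ι ι ℂ)) : Set (Matrix ι ι ℂ)) :=
    Submodule.closed_of_finiteDimensional _
  have hmem : ∀ k : ℕ, (k.factorial⁻¹ : ℂ) • M ^ k ∈
      Subalgebra.toSubmodule (Algebra.adjoin ℂ {M}) := fun k =>
    Submodule.smul_mem _ _ (by
      simpa using Subalgebra.pow_mem _ (Algebra.self_mem_adjoin_singleton ℂ M) k)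
  exact hcl.mem_of_tendsto h1.tendsto_sum_nat
    (Filter.Eventually.of_forall fun k => Submodule.sum_mem _ fun i _ => hmem i)

lemma nontrivial_matrix [Nonempty ι] : Nontrivial (Matrix ι ι ℂ) := by
  obtain ⟨i⟩ := ‹Nonempty ι›
  refine ⟨0, 1, fun h => ?_⟩
  have := congrFun (congrFun h i) i
  simp [Matrix.one_apply] at this

lemma spectrum_exp_subset [Nonempty ι] (M : Matrix ι ι ℂ) :
    spectrum ℂ (exp M) ⊆ Complex.exp '' spectrum ℂ M := by
  haveI := nontrivial_matrix (ι := ι)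
  obtain ⟨q, hq⟩ : ∃ q : ℂ[X], aeval M q = exp M := by
    have h := exp_mem_adjoin M
    rw [Algebra.adjoin_singleton_eq_range_aeval] at h
    exact h
  have hnon : (spectrum ℂ M).Nonempty := spectrum.nonempty M
  rw [← hq, spectrum.map_polynomial_aeval_of_nonempty M q hnon]
  rintro _ ⟨μ, hμ, rfl⟩
  obtain ⟨v, hv1, hv0⟩ : ∃ v : ι → ℂ, M.mulVec v = μ • v ∧ v ≠ 0 := by
    have hev : Module.End.HasEigenvalue (Matrix.toLinAlgEquiv' M) μ := by
      apply Module.End.hasEigenvalue_iff_mem_spectrum.mpr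
      rwa [AlgEquiv.spectrum_eq Matrix.toLinAlgEquiv' M]
    obtain ⟨v, hv⟩ := hev.exists_hasEigenvector
    exact ⟨v, by simpa [Matrix.toLinAlgEquiv'_apply, Matrix.toLin'_apply] using hv.apply_eq_smul, hv.right⟩
  have h1 := eigen_aeval M hv1 q
  rw [hq, eigen_exp M hv1] at h1
  have h2 : Complex.exp μ = q.eval μ := smul_left_injective ℂ hv0 h1
  exact ⟨μ, hμ, h2⟩


lemma spectralRadius_exp_lt [Nonempty ι] (M : Matrix ι ι ℂ)
    (hM : ∀ μ ∈ spectrum ℂ M, μ.re < 0) :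
    ∃ ρ : NNReal, ρ < 1 ∧ spectralRadius ℂ (exp M) ≤ (ρ : ENNReal) := by
  haveI := nontrivial_matrix (ι := ι)
  have hnon : (spectrum ℂ M).Nonempty := spectrum.nonempty M
  have hcpt : IsCompact (spectrum ℂ M) := spectrum.isCompact M
  obtain ⟨l₀, hl₀, hmax'⟩ := hcpt.exists_isMaxOn hnon Complex.continuous_re.continuousOn
  have hmax : ∀ l ∈ spectrum ℂ M, l.re ≤ l₀.re := fun l hl => hmax' hl
  refine ⟨⟨Real.exp l₀.re, (Real.exp_pos _).le⟩, ?_, ?_⟩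
  · erw [← NNReal.coe_lt_coe]
    exact Real.exp_lt_one_iff.mpr (hM l₀ hl₀)
  · rw [spectralRadius]
    refine iSup₂_le fun μ hμ => ?_
    obtain ⟨l, hl, rfl⟩ := spectrum_exp_subset M hμ
    erw [ENNReal.coe_le_coe, ← NNReal.coe_le_coe]
    simp only [coe_nnnorm, NNReal.coe_mk]
    rw [Complex.norm_exp]
    exact Real.exp_le_exp.mpr (hmax l hl)

lemma norm_exp_le [Nonempty ι] (X : Matrix ι ι ℂ) : ‖exp X‖ ≤ Real.exp ‖X‖ := by
  rw [exp_eq_tsum ℂ]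
  refine (norm_tsum_le_tsum_norm (norm_expSeries_summable' X)).trans ?_
  rw [Real.exp_eq_exp_ℝ, exp_eq_tsum ℝ]
  refine (norm_expSeries_summable' X).tsum_le_tsum ?_ (expSeries_summable' (𝕂 := ℝ) ‖X‖)
  intro k
  rw [norm_smul, smul_eq_mul]
  have h1 : ‖(k.factorial⁻¹ : ℂ)‖ = (k.factorial⁻¹ : ℝ) := by
    rw [norm_inv]
    simp
  rw [h1]
  have h2 : ‖X ^ k‖ ≤ ‖X‖ ^ k := by
    cases k with
    | zero => simp
    | succ k => exact norm_pow_le' X k.succ_pos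
  have h3 : (0:ℝ) ≤ (k.factorial : ℝ)⁻¹ := by positivity
  calc (k.factorial : ℝ)⁻¹ * ‖X ^ k‖ ≤ (k.factorial : ℝ)⁻¹ * ‖X‖ ^ k :=
        mul_le_mul_of_nonneg_left h2 h3
    _ = (k.factorial : ℝ)⁻¹ • ‖X‖ ^ k := (smul_eq_mul _ _).symm


lemma norm_map_algebraMap (X : Matrix ι ι ℝ) :
    ‖X.map (algebraMap ℝ ℂ)‖ = ‖X‖ := by
  rw [← coe_nnnorm, ← coe_nnnorm]
  congr 1
  rw [Matrix.linfty_opNNNorm_def, Matrix.linfty_opNNNorm_def]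
  congr 1
  funext i
  congr 1
  funext j
  simp [Matrix.map_apply, Complex.nnnorm_real]

lemma map_exp_smul (M : Matrix ι ι ℝ) (t : ℝ) :
    (exp (t • M)).map (algebraMap ℝ ℂ)
      = exp (t • M.map (algebraMap ℝ ℂ)) := by
  have hcont : Continuous ((algebraMap ℝ ℂ).mapMatrix :
      Matrix ι ι ℝ →+* Matrix ι ι ℂ) := by
    show Continuous fun X : Matrix ι ι ℝ => X.map (algebraMap ℝ ℂ)
    exact continuous_id.matrix_map (continuous_algebraMap ℝ ℂ)
  have h1 := map_exp ((algebraMap ℝ ℂ).mapMatrix : Matrix ι ι ℝ →+* Matrix ι ι ℂ)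
    hcont (t • M)
  simp only [RingHom.mapMatrix_apply] at h1
  erw [h1]
  have h2 : ((t • M).map (algebraMap ℝ ℂ)) = t • M.map (algebraMap ℝ ℂ) :=
    Matrix.map_smul _ t (fun a => by simp [Complex.real_smul]) M
  rw [h2]
  rfl

lemma tendsto_exp_smul_zero (M : Matrix ι ι ℝ)
    (hM : ∀ μ ∈ spectrum ℂ (M.map (algebraMap ℝ ℂ)), μ.re < 0) :
    Tendsto (fun t : ℝ => exp (t • M)) atTop (nhds 0) := by
  cases isEmpty_or_nonempty ι with
  | inl h =>
      have : (fun t : ℝ => exp (t • M)) = fun _ => 0 :=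
        funext fun _ => Subsingleton.elim _ _
      rw [this]; exact tendsto_const_nhds
  | inr h =>
      set Mc := M.map (algebraMap ℝ ℂ) with hMc
      obtain ⟨ρ, hρ1, hρle⟩ := spectralRadius_exp_lt Mc hM
      set T := exp Mc with hT
      set r : NNReal := (1 + ρ) / 2 with hr
      have hρ1' : (ρ : ℝ) < 1 := by exact_mod_cast hρ1
      have hrc : (r : ℝ) = (1 + (ρ:ℝ)) / 2 := by rw [hr]; push_cast; ring
      have hρr : ρ < r := by
        rw [← NNReal.coe_lt_coe, hrc]
        linarith
      have hr1 : (r : ℝ) < 1 := by rw [hrc]; linarith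
      have hgel := spectrum.pow_nnnorm_pow_one_div_tendsto_nhds_spectralRadius T
      have hlt : spectralRadius ℂ T < (r : ENNReal) :=
        lt_of_le_of_lt hρle (by exact_mod_cast hρr)
      have hev : ∀ᶠ k : ℕ in atTop, (‖T ^ k‖₊ : ENNReal) ^ (1 / (k : ℝ)) < (r : ENNReal) :=
        hgel.eventually_lt_const hlt
      have hevk : ∀ᶠ k : ℕ in atTop, ‖T ^ k‖ ≤ (r : ℝ) ^ k := by
        filter_upwards [hev, eventually_ge_atTop 1] with k hk hk1
        have hk0 : (k : ℝ) ≠ 0 := Nat.cast_ne_zero.mpr (by omega)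
        have h1 := ENNReal.rpow_le_rpow hk.le (Nat.cast_nonneg k : (0:ℝ) ≤ (k:ℝ))
        rw [← ENNReal.rpow_mul, one_div, inv_mul_cancel₀ hk0, ENNReal.rpow_one] at h1
        rw [ENNReal.rpow_natCast, ← ENNReal.coe_pow, ENNReal.coe_le_coe] at h1
        calc ‖T ^ k‖ = ((‖T ^ k‖₊ : NNReal) : ℝ) := (coe_nnnorm _).symm
          _ ≤ ((r ^ k : NNReal) : ℝ) := NNReal.coe_le_coe.mpr h1
          _ = (r : ℝ) ^ k := by push_cast; ring
      obtain ⟨k₀, hk₀⟩ := eventually_atTop.mp hevk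
      -- continuous-time bound
      have key : ∀ t : ℝ, 0 ≤ t →
          ‖exp (t • M)‖ ≤ Real.exp ‖Mc‖ * ‖T ^ ⌊t⌋₊‖ := by
        intro t ht
        set k := ⌊t⌋₊ with hk
        set s := t - (k : ℝ) with hs
        have hs0 : 0 ≤ s := sub_nonneg.mpr (Nat.floor_le ht)
        have hs1 : s ≤ 1 := by
          have := Nat.lt_floor_add_one t
          rw [hs]; push_cast; linarith
        have hsplit : exp (t • Mc) = exp (s • Mc) * T ^ k := by
          have hts : t • Mc = s • Mc + (k : ℝ) • Mc := by
            rw [← add_smul]; congr 1; rw [hs]; ring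
          have hcomm : Commute (s • Mc) ((k : ℝ) • Mc) :=
            ((Commute.refl Mc).smul_left s).smul_right ((k : ℝ))
          erw [hts, exp_add_of_commute hcomm]
          congr 1
          erw [show ((k : ℝ) • Mc) = (k • Mc : Matrix ι ι ℂ) from
            (Nat.cast_smul_eq_nsmul ℝ k Mc), Matrix.exp_nsmul, hT]
        have heq : ‖exp (t • M)‖ = ‖exp (t • Mc)‖ := by
          rw [← map_exp_smul M t, norm_map_algebraMap]
        rw [heq, hsplit]
        refine (norm_mul_le _ _).trans ?_
        refine mul_le_mul_of_nonneg_right ?_ (norm_nonneg _)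
        refine (norm_exp_le _).trans ?_
        rw [Real.exp_le_exp, norm_smul, Real.norm_eq_abs, abs_of_nonneg hs0]
        nlinarith [norm_nonneg Mc]
      -- squeeze
      erw [tendsto_zero_iff_norm_tendsto_zero]
      have hub : Tendsto (fun t : ℝ => Real.exp ‖Mc‖ * ((r:ℝ) ^ ⌊t⌋₊)) atTop (nhds 0) := by
        have h1 : Tendsto (fun k : ℕ => (r:ℝ) ^ k) atTop (nhds 0) :=
          tendsto_pow_atTop_nhds_zero_of_lt_one r.coe_nonneg hr1
        have h2 := (h1.comp (tendsto_nat_floor_atTop (α := ℝ))).const_mul (Real.exp ‖Mc‖)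
        simpa using h2
      refine squeeze_zero' (Eventually.of_forall fun t => norm_nonneg _) ?_ hub
      filter_upwards [eventually_ge_atTop (0:ℝ), eventually_ge_atTop (k₀:ℝ)] with t ht htk
      refine (key t ht).trans ?_
      refine mul_le_mul_of_nonneg_left ?_ (Real.exp_pos _).le
      exact hk₀ ⌊t⌋₊ (Nat.le_floor htk)


lemma ode_solution (M : Matrix ι ι ℝ) (z : ℝ → ι → ℝ)
    (hz : ∀ t, HasDerivAt z (M.mulVec (z t)) t) (t : ℝ) :
    z t = (exp (t • M)).mulVec (z 0) := by
  set g : ℝ → ι → ℝ := fun u => (exp (u • M)).mulVec (z 0) with hg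
  have hg' : ∀ u : ℝ, HasDerivAt g (M.mulVec (g u)) u := by
    intro u
    have h1 := hasDerivAt_exp_smul_const' (𝕂 := ℝ) M u
    have h2 := (mulVecCLM ℝ (z 0)).hasFDerivAt.comp_hasDerivAt u h1
    have h3 : (mulVecCLM ℝ (z 0)) (M * exp (u • M))
        = M.mulVec (g u) := by
      rw [mulVecCLM_apply, ← Matrix.mulVec_mulVec]
    erw [h3] at h2
    exact h2
  have hlip : LipschitzWith ‖M‖₊ (fun y : ι → ℝ => M.mulVec y) := by
    refine LipschitzWith.of_dist_le_mul fun y w => ?_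
    rw [dist_eq_norm, dist_eq_norm, ← Matrix.mulVec_sub]
    exact Matrix.linfty_opNorm_mulVec M (y - w)
  have h0 : z 0 = g 0 := by
    rw [hg]
    simp [Matrix.one_mulVec]
  have hmem : t ∈ Set.Ioo (-(|t| + 1)) (|t| + 1) := by
    constructor
    · have := neg_abs_le t; linarith
    · have := le_abs_self t; linarith
  have h0mem : (0:ℝ) ∈ Set.Ioo (-(|t| + 1)) (|t| + 1) := by
    have := abs_nonneg t
    constructor <;> [linarith; linarith]
  have huniq := ODE_solution_unique_of_mem_Ioo
    (v := fun _ (y : ι → ℝ) => M.mulVec y) (s := fun _ => Set.univ) (K := ‖M‖₊)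
    (fun _ _ => hlip.lipschitzOnWith) h0mem
    (fun u _ => ⟨hz u, trivial⟩) (fun u _ => ⟨hg' u, trivial⟩) h0
  exact huniq hmem

lemma tendsto_zero_of_ode (M : Matrix ι ι ℝ)
    (hM : ∀ μ ∈ spectrum ℂ (M.map (algebraMap ℝ ℂ)), μ.re < 0)
    (z : ℝ → ι → ℝ) (hz : ∀ t, HasDerivAt z (M.mulVec (z t)) t) :
    Tendsto z atTop (nhds 0) := by
  have hexp := tendsto_exp_smul_zero M hM
  have heq : z = fun t => (exp (t • M)).mulVec (z 0) := funext (ode_solution M z hz)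
  rw [heq]
  have hco := ((mulVecCLM ℝ (z 0)).continuous.tendsto 0).comp hexp
  simpa [Matrix.zero_mulVec, Function.comp_def] using hco

lemma spectrum_fromBlocks_subset {ι₁ ι₂ : Type*} [Fintype ι₁] [DecidableEq ι₁]
    [Fintype ι₂] [DecidableEq ι₂]
    (G : Matrix ι₁ ι₁ ℂ) (K : Matrix ι₁ ι₂ ℂ) (F : Matrix ι₂ ι₂ ℂ) :
    spectrum ℂ (fromBlocks G K 0 F) ⊆ spectrum ℂ G ∪ spectrum ℂ F := by
  intro μ hμ
  by_contra hc
  simp only [Set.mem_union] at hc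
  push_neg at hc
  obtain ⟨h1, h2⟩ := hc
  rw [spectrum.notMem_iff] at h1 h2
  rw [spectrum.mem_iff] at hμ
  apply hμ
  have hblock : algebraMap ℂ (Matrix (ι₁ ⊕ ι₂) (ι₁ ⊕ ι₂) ℂ) μ - fromBlocks G K 0 F
      = fromBlocks (algebraMap ℂ (Matrix ι₁ ι₁ ℂ) μ - G) (-K) 0
          (algebraMap ℂ (Matrix ι₂ ι₂ ℂ) μ - F) := by
    rw [Algebra.algebraMap_eq_smul_one, Algebra.algebraMap_eq_smul_one,
      Algebra.algebraMap_eq_smul_one, ← Matrix.fromBlocks_one, Matrix.fromBlocks_smul,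
      sub_eq_add_neg, Matrix.fromBlocks_neg, Matrix.fromBlocks_add]
    simp [sub_eq_add_neg]
  rw [hblock, Matrix.isUnit_iff_isUnit_det, Matrix.det_fromBlocks_zero₂₁]
  exact (((Matrix.isUnit_iff_isUnit_det _).mp h1).mul
    ((Matrix.isUnit_iff_isUnit_det _).mp h2))


end Spectral




variable {n N : ℕ}

noncomputable def xbar (sa : ℝ) (a : Fin N → ℝ) (x : ℝ → Fin N → Fin n → ℝ) (t : ℝ) :
    Fin n → ℝ :=
  sa⁻¹ • ∑ l, a l • x t l

noncomputable def del (sa : ℝ) (a : Fin N → ℝ) (x : ℝ → Fin N → Fin n → ℝ) (t : ℝ)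
    (l : Fin N) : Fin n → ℝ :=
  x t l - xbar sa a x t

noncomputable def eps (sa : ℝ) (a : Fin N → ℝ) (x δhat : ℝ → Fin N → Fin n → ℝ) (t : ℝ)
    (l : Fin N) : Fin n → ℝ :=
  del sa a x t l - δhat t l

noncomputable def eta (sa : ℝ) (a : Fin N → ℝ) (x δhat : ℝ → Fin N → Fin n → ℝ) (t : ℝ)
    (l : Fin N) : Fin n → ℝ :=
  eps sa a x δhat t l - xbar sa a (eps sa a x δhat) t

lemma mulVec_wavg {q : ℕ} (W : Matrix (Fin q) (Fin n) ℝ) (sa : ℝ) (a : Fin N → ℝ)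
    (v : Fin N → Fin n → ℝ) :
    W.mulVec (sa⁻¹ • ∑ l, a l • v l) = sa⁻¹ • ∑ l, a l • W.mulVec (v l) := by
  rw [← Matrix.mulVecLin_apply, _root_.map_smul, map_sum]
  simp_rw [_root_.map_smul, Matrix.mulVecLin_apply]

lemma core (Am Km R : Matrix (Fin n) (Fin n) ℝ)
    (hG : ∀ μ ∈ spectrum ℂ ((Am - Km).map (algebraMap ℝ ℂ)), μ.re < 0)
    (hF : ∀ μ ∈ spectrum ℂ ((Am + R).map (algebraMap ℝ ℂ)), μ.re < 0)
    (a : Fin N → ℝ) (sa : ℝ) (hsa : sa = ∑ l, a l) (hsa0 : sa ≠ 0)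
    (x δhat : ℝ → Fin N → Fin n → ℝ)
    (hx : ∀ (l : Fin N) (t : ℝ), HasDerivAt (fun u => x u l)
      (Am.mulVec (x t l) - Km.mulVec (δhat t l)) t)
    (hdh : ∀ (l : Fin N) (t : ℝ), HasDerivAt (fun u => δhat u l)
      ((Am - Km).mulVec (δhat t l) - R.mulVec (del sa a x t l - δhat t l)) t)
    (l : Fin N) :
    Tendsto (fun t => del sa a x t l) atTop (nhds 0) := by
  classical
  -- sum facts
  have fsumδ : ∀ t, ∑ k, a k • del sa a x t k = 0 := by
    intro t
    simp only [del, smul_sub]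
    rw [Finset.sum_sub_distrib, ← Finset.sum_smul, ← hsa, xbar, smul_smul,
      mul_inv_cancel₀ hsa0, one_smul, sub_self]
  have fsumε : ∀ t, sa • xbar sa a (eps sa a x δhat) t = ∑ k, a k • eps sa a x δhat t k := by
    intro t
    rw [xbar, smul_smul, mul_inv_cancel₀ hsa0, one_smul]
  have fsumη : ∀ t, ∑ k, a k • eta sa a x δhat t k = 0 := by
    intro t
    simp only [eta, smul_sub]
    rw [Finset.sum_sub_distrib, ← Finset.sum_smul, ← hsa, fsumε t, sub_self]
  have hδhatb : ∀ t, sa⁻¹ • ∑ k, a k • δhat t k = - xbar sa a (eps sa a x δhat) t := by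
    intro t
    have hkk : ∀ k, a k • δhat t k = a k • del sa a x t k - a k • eps sa a x δhat t k := by
      intro k
      rw [← smul_sub]
      congr 1
      rw [eps]
      abel
    calc sa⁻¹ • ∑ k, a k • δhat t k
        = sa⁻¹ • (∑ k, a k • del sa a x t k - ∑ k, a k • eps sa a x δhat t k) := by
          rw [← Finset.sum_sub_distrib]
          simp_rw [hkk]
      _ = - xbar sa a (eps sa a x δhat) t := by
          rw [fsumδ t, ← fsumε t, zero_sub, smul_neg, inv_smul_smul₀ hsa0]
  -- derivative of xbar
  have hxb : ∀ t, HasDerivAt (xbar sa a x)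
      (sa⁻¹ • ∑ k, a k • (Am.mulVec (x t k) - Km.mulVec (δhat t k))) t := by
    intro t
    exact (HasDerivAt.fun_sum fun k _ => (hx k t).const_smul (a k)).const_smul sa⁻¹
  -- the weighted average of the x-derivatives
  have e1 : ∀ t, sa⁻¹ • ∑ k, a k • (Am.mulVec (x t k) - Km.mulVec (δhat t k))
      = Am.mulVec (xbar sa a x t) + Km.mulVec (xbar sa a (eps sa a x δhat) t) := by
    intro t
    simp_rw [smul_sub]
    rw [Finset.sum_sub_distrib, smul_sub, ← mulVec_wavg Am sa a (fun k => x t k),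
      ← mulVec_wavg Km sa a (fun k => δhat t k),
      show (sa⁻¹ • ∑ k, a k • x t k) = xbar sa a x t from rfl,
      hδhatb t, Matrix.mulVec_neg, sub_neg_eq_add]
  -- derivative of δ
  have hδ' : ∀ (k : Fin N) (t : ℝ), HasDerivAt (fun u => del sa a x u k)
      ((Am - Km).mulVec (del sa a x t k) + Km.mulVec (eta sa a x δhat t k)) t := by
    intro k t
    have hD := (hx k t).sub (hxb t)
    have heq : HasDerivAt (fun u => del sa a x u k)
        (Am.mulVec (x t k) - Km.mulVec (δhat t k)
          - sa⁻¹ • ∑ k', a k' • (Am.mulVec (x t k') - Km.mulVec (δhat t k'))) t := hD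
    convert heq using 1
    rw [e1 t]
    simp only [eta, eps, del, Matrix.sub_mulVec, Matrix.mulVec_sub]
    abel
  -- derivative of ε
  have hε' : ∀ (k : Fin N) (t : ℝ), HasDerivAt (fun u => eps sa a x δhat u k)
      ((Am - Km + R).mulVec (eps sa a x δhat t k) + Km.mulVec (eta sa a x δhat t k)) t := by
    intro k t
    have hD := (hδ' k t).sub (hdh k t)
    have heq : HasDerivAt (fun u => eps sa a x δhat u k)
        (((Am - Km).mulVec (del sa a x t k) + Km.mulVec (eta sa a x δhat t k))
          - ((Am - Km).mulVec (δhat t k) - R.mulVec (del sa a x t k - δhat t k))) t := hD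
    convert heq using 1
    simp only [eps, Matrix.add_mulVec, Matrix.sub_mulVec, Matrix.mulVec_sub]
    abel
  -- derivative of εbar
  have hεb' : ∀ t, HasDerivAt (xbar sa a (eps sa a x δhat))
      ((Am - Km + R).mulVec (xbar sa a (eps sa a x δhat) t)) t := by
    intro t
    have hD := (HasDerivAt.fun_sum fun k (_ : k ∈ Finset.univ) =>
      (hε' k t).const_smul (a k)).const_smul sa⁻¹
    have heq : HasDerivAt (xbar sa a (eps sa a x δhat))
        (sa⁻¹ • ∑ k, a k • ((Am - Km + R).mulVec (eps sa a x δhat t k)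
          + Km.mulVec (eta sa a x δhat t k))) t := hD
    convert heq using 1
    simp_rw [smul_add]
    rw [Finset.sum_add_distrib, smul_add,
      ← mulVec_wavg (Am - Km + R) sa a (fun k => eps sa a x δhat t k),
      ← mulVec_wavg Km sa a (fun k => eta sa a x δhat t k),
      show (sa⁻¹ • ∑ k, a k • eps sa a x δhat t k) = xbar sa a (eps sa a x δhat) t from rfl,
      fsumη t, smul_zero, Matrix.mulVec_zero, add_zero]
  -- derivative of η
  have hη' : ∀ (k : Fin N) (t : ℝ), HasDerivAt (fun u => eta sa a x δhat u k)
      ((Am + R).mulVec (eta sa a x δhat t k)) t := by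
    intro k t
    have hD := (hε' k t).sub (hεb' t)
    have heq : HasDerivAt (fun u => eta sa a x δhat u k)
        (((Am - Km + R).mulVec (eps sa a x δhat t k) + Km.mulVec (eta sa a x δhat t k))
          - (Am - Km + R).mulVec (xbar sa a (eps sa a x δhat) t)) t := hD
    convert heq using 1
    have hAR : Am + R = (Am - Km + R) + Km := by abel
    rw [hAR]
    simp only [eta, Matrix.add_mulVec, Matrix.sub_mulVec, Matrix.mulVec_sub]
    abel
  -- block system
  set MM : Matrix (Fin n ⊕ Fin n) (Fin n ⊕ Fin n) ℝ :=
    fromBlocks (Am - Km) Km 0 (Am + R) with hMM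
  have hspec : ∀ μ ∈ spectrum ℂ (MM.map (algebraMap ℝ ℂ)), μ.re < 0 := by
    intro μ hμ
    rw [hMM, Matrix.fromBlocks_map] at hμ
    have h0 : (0 : Matrix (Fin n) (Fin n) ℝ).map (algebraMap ℝ ℂ) = 0 := by
      ext i' j'
      simp
    rw [h0] at hμ
    rcases spectrum_fromBlocks_subset _ _ _ hμ with h | h
    · exact hG μ h
    · exact hF μ h
  have hz : ∀ t, HasDerivAt
      (fun u => Sum.elim (del sa a x u l) (eta sa a x δhat u l))
      (MM.mulVec (Sum.elim (del sa a x t l) (eta sa a x δhat t l))) t := by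
    intro t
    have hmv : MM.mulVec (Sum.elim (del sa a x t l) (eta sa a x δhat t l))
        = Sum.elim ((Am - Km).mulVec (del sa a x t l) + Km.mulVec (eta sa a x δhat t l))
            ((Am + R).mulVec (eta sa a x δhat t l)) := by
      rw [hMM, Matrix.fromBlocks_mulVec]
      simp [Matrix.zero_mulVec]
    rw [hmv]
    refine hasDerivAt_pi.mpr ?_
    rintro (c | c)
    · exact hasDerivAt_pi.mp (hδ' l t) c
    · exact hasDerivAt_pi.mp (hη' l t) c
  have htend := tendsto_zero_of_ode MM hspec _ hz
  rw [tendsto_pi_nhds]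
  intro c
  have := (tendsto_pi_nhds.mp htend) (Sum.inl c)
  simpa using this


end ConsensusAux

/-- With `P₀` symmetric positive semidefinite solving
`Aᵀ P₀ + P₀ A = P₀ B Bᵀ P₀`, `A − B Bᵀ P₀` Hurwitz, and `Q` such that `A + Q Cᵀ C` is Hurwitz,
the observer-based output feedback `uᵢ = −Bᵀ P₀ δ̂ᵢ`, where
`δ̂̇ᵢ = (A − B Bᵀ P₀) δ̂ᵢ − Q Cᵀ ((∑_k a_k)⁻¹ ∑_j a_j (yᵢ − y_j) − C δ̂ᵢ)`, drives the system
to asymptotic output consensus from every initial condition. -/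
theorem asymptotic_output_consensus_observer_feedback {n m p N : ℕ}
    (A : Matrix (Fin n) (Fin n) ℝ) (B : Matrix (Fin n) (Fin m) ℝ)
    (C : Matrix (Fin p) (Fin n) ℝ) (hC : C.rank = p)
    (P₀ : Matrix (Fin n) (Fin n) ℝ) (hP : P₀.PosSemidef)
    (hare : Aᵀ * P₀ + P₀ * A = P₀ * B * Bᵀ * P₀)
    (hhur : IsHurwitz (A - B * Bᵀ * P₀))
    (Q : Matrix (Fin n) (Fin n) ℝ) (hQ : IsHurwitz (A + Q * Cᵀ * C))
    (a : Fin N → ℝ) (ha : ∀ i, 0 < a i)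
    (x : ℝ → Fin N → Fin n → ℝ) (δhat : ℝ → Fin N → Fin n → ℝ)
    (hodex : ∀ (i : Fin N) (t : ℝ),
      HasDerivAt (fun s => x s i)
        (A.mulVec (x t i) + B.mulVec (-(Bᵀ * P₀).mulVec (δhat t i))) t)
    (hodeδ : ∀ (i : Fin N) (t : ℝ),
      HasDerivAt (fun s => δhat s i)
        ((A - B * Bᵀ * P₀).mulVec (δhat t i) -
          (Q * Cᵀ).mulVec
            ((∑ k, a k)⁻¹ • (∑ j, a j • (C.mulVec (x t i) - C.mulVec (x t j))) -
              C.mulVec (δhat t i))) t) :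
    ∀ i j : Fin N,
      Tendsto (fun t => C.mulVec (x t i) - C.mulVec (x t j)) atTop (nhds 0) := by
  intro i j
  classical
  set sa : ℝ := ∑ k, a k with hsa
  have hsa0 : 0 < sa := Finset.sum_pos (fun k _ => ha k) ⟨i, Finset.mem_univ i⟩
  have hsa' : sa ≠ 0 := ne_of_gt hsa0
  -- rewrite the agent dynamics
  have hx : ∀ (l : Fin N) (t : ℝ), HasDerivAt (fun u => x u l)
      (A.mulVec (x t l) - (B * Bᵀ * P₀).mulVec (δhat t l)) t := by
    intro l t
    have h := hodex l t
    have he : A.mulVec (x t l) + B.mulVec (-(Bᵀ * P₀).mulVec (δhat t l))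
        = A.mulVec (x t l) - (B * Bᵀ * P₀).mulVec (δhat t l) := by
      rw [Matrix.mulVec_neg, Matrix.mulVec_mulVec, Matrix.mul_assoc, sub_eq_add_neg]
    rwa [he] at h
  -- rewrite the observer dynamics
  have hdh : ∀ (l : Fin N) (t : ℝ), HasDerivAt (fun u => δhat u l)
      ((A - B * Bᵀ * P₀).mulVec (δhat t l) -
        (Q * Cᵀ * C).mulVec (ConsensusAux.del sa a x t l - δhat t l)) t := by
    intro l t
    have h := hodeδ l t
    have he : (Q * Cᵀ).mulVec
        (sa⁻¹ • (∑ j', a j' • (C.mulVec (x t l) - C.mulVec (x t j'))) -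
          C.mulVec (δhat t l))
        = (Q * Cᵀ * C).mulVec (ConsensusAux.del sa a x t l - δhat t l) := by
      have einner : sa⁻¹ • (∑ j', a j' • (C.mulVec (x t l) - C.mulVec (x t j')))
          = C.mulVec (ConsensusAux.del sa a x t l) := by
        simp_rw [smul_sub]
        rw [Finset.sum_sub_distrib, smul_sub, ← Finset.sum_smul, ← hsa,
          ← ConsensusAux.mulVec_wavg C sa a (fun j' => x t j'),
          show (sa⁻¹ • ∑ j', a j' • x t j') = ConsensusAux.xbar sa a x t from rfl,
          inv_smul_smul₀ hsa', ← Matrix.mulVec_sub]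
        rfl
      rw [einner, ← Matrix.mulVec_sub, Matrix.mulVec_mulVec]
    rwa [he] at h
  have hi := ConsensusAux.core A (B * Bᵀ * P₀) (Q * Cᵀ * C) hhur hQ a sa hsa hsa' x δhat
    hx hdh i
  have hj := ConsensusAux.core A (B * Bᵀ * P₀) (Q * Cᵀ * C) hhur hQ a sa hsa hsa' x δhat
    hx hdh j
  have hsub := hi.sub hj
  rw [sub_zero] at hsub
  have hcont : Continuous fun v : Fin n → ℝ => C.mulVec v := by
    have h := LinearMap.continuous_of_finiteDimensional (Matrix.mulVecLin C)
    exact h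
  have hfin := (hcont.tendsto 0).comp hsub
  have heq : ((fun v : Fin n → ℝ => C.mulVec v) ∘
      fun t => ConsensusAux.del sa a x t i - ConsensusAux.del sa a x t j)
      = fun t => C.mulVec (x t i) - C.mulVec (x t j) := by
    funext t
    show C.mulVec (ConsensusAux.del sa a x t i - ConsensusAux.del sa a x t j) = _
    rw [Matrix.mulVec_sub]
    simp only [ConsensusAux.del, Matrix.mulVec_sub]
    abel
  rw [heq] at hfin
  simpa [Matrix.mulVec_zero] using hfin
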